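/- Let c ≥ 0 be a real number, let k ≥ 1, and let v₁, …, v_k ∈ ℝ² with vᵢ = (xᵢ, yᵢ) and yᵢ > 0 for all i. Set P = (x_P, y_P) := v₁ + ⋯ + v_k, and let Q = (x_Q, y_Q) be a point with 0 < y_Q < y_P such that (x_P − x_Q)/(y_P − y_Q) ≤ xᵢ/yᵢ ≤ x_Q/y_Q for every i. Then Σᵢ √(xᵢ² + c·yᵢ²) ≤ √(x_Q² + c·y_Q²) + √((x_P − x_Q)² + c·(y_P − y_Q)²). -/

import Mathlib

private lemma wnorm_eq_cabs (c : ℝ) (hc : 0 ≤ c) (t u : ℝ) :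
    Real.sqrt (t ^ 2 + c * u ^ 2) = ‖(⟨t, Real.sqrt c * u⟩ : ℂ)‖ := by
  rw [Complex.norm_def, Complex.normSq_mk]
  congr 1
  have h := Real.mul_self_sqrt hc
  nlinarith [h]

private lemma key_ineq (c : ℝ) (hc : 0 ≤ c) (a b p q r s : ℝ)
    (ha : 0 ≤ a) (hb : 0 ≤ b) :
    Real.sqrt ((a * p + b * r) ^ 2 + c * (a * q + b * s) ^ 2) ≤
      a * Real.sqrt (p ^ 2 + c * q ^ 2) + b * Real.sqrt (r ^ 2 + c * s ^ 2) := by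
  rw [wnorm_eq_cabs c hc, wnorm_eq_cabs c hc, wnorm_eq_cabs c hc]
  have h : (⟨a * p + b * r, Real.sqrt c * (a * q + b * s)⟩ : ℂ)
      = (a : ℂ) * ⟨p, Real.sqrt c * q⟩ + (b : ℂ) * ⟨r, Real.sqrt c * s⟩ := by
    apply Complex.ext
    · simp [Complex.mul_re]
    · simp [Complex.mul_im]; ring
  rw [h]
  calc ‖(a : ℂ) * (⟨p, Real.sqrt c * q⟩ : ℂ) + (b : ℂ) * (⟨r, Real.sqrt c * s⟩ : ℂ)‖
      ≤ ‖(a : ℂ) * (⟨p, Real.sqrt c * q⟩ : ℂ)‖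
        + ‖(b : ℂ) * (⟨r, Real.sqrt c * s⟩ : ℂ)‖ := norm_add_le _ _
    _ = a * ‖(⟨p, Real.sqrt c * q⟩ : ℂ)‖ + b * ‖(⟨r, Real.sqrt c * s⟩ : ℂ)‖ := by
        rw [norm_mul, norm_mul, Complex.norm_of_nonneg ha, Complex.norm_of_nonneg hb]

private lemma chain_bound (c : ℝ) (hc : 0 ≤ c) (k : ℕ) (x y : Fin k → ℝ)
    (xQ yQ xW yW : ℝ) (a b : Fin k → ℝ)
    (ha : ∀ i, 0 ≤ a i) (hb : ∀ i, 0 ≤ b i)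
    (hx : ∀ i, x i = a i * xQ + b i * xW)
    (hyy : ∀ i, y i = a i * yQ + b i * yW)
    (hsa : ∑ i, a i = 1) (hsb : ∑ i, b i = 1) :
    ∑ i, Real.sqrt ((x i) ^ 2 + c * (y i) ^ 2) ≤
      Real.sqrt (xQ ^ 2 + c * yQ ^ 2) + Real.sqrt (xW ^ 2 + c * yW ^ 2) := by
  calc ∑ i, Real.sqrt ((x i) ^ 2 + c * (y i) ^ 2)
      ≤ ∑ i, (a i * Real.sqrt (xQ ^ 2 + c * yQ ^ 2)
          + b i * Real.sqrt (xW ^ 2 + c * yW ^ 2)) := by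
        apply Finset.sum_le_sum
        intro i _
        rw [hx i, hyy i]
        exact key_ineq c hc _ _ _ _ _ _ (ha i) (hb i)
    _ = Real.sqrt (xQ ^ 2 + c * yQ ^ 2) + Real.sqrt (xW ^ 2 + c * yW ^ 2) := by
        rw [Finset.sum_add_distrib, ← Finset.sum_mul, ← Finset.sum_mul, hsa, hsb,
          one_mul, one_mul]

/-- Weighted-norm chain bound from the proof of Proposition 4.13: vectors
`(xᵢ, yᵢ)` with `yᵢ > 0` summing to `P`, whose slopes all lie between the slopes
of `QP` and `OQ`, have total weighted length at most the sum of the weighted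
lengths of `OQ` and `QP`. -/
theorem stmt_9 (c : ℝ) (hc : 0 ≤ c) (k : ℕ) (hk : 1 ≤ k)
    (x y : Fin k → ℝ) (hy : ∀ i, 0 < y i)
    (xP yP : ℝ) (hxP : xP = ∑ i, x i) (hyP : yP = ∑ i, y i)
    (xQ yQ : ℝ) (hyQ0 : 0 < yQ) (hyQP : yQ < yP)
    (hslope : ∀ i, (xP - xQ) / (yP - yQ) ≤ x i / y i ∧ x i / y i ≤ xQ / yQ) :
    ∑ i, Real.sqrt ((x i) ^ 2 + c * (y i) ^ 2) ≤
      Real.sqrt (xQ ^ 2 + c * yQ ^ 2) +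
        Real.sqrt ((xP - xQ) ^ 2 + c * (yP - yQ) ^ 2) := by
  have hD : (0:ℝ) < yP - yQ := by linarith
  have hyPpos : (0:ℝ) < yP := by linarith
  have hA : ∀ i, (xP - xQ) * y i ≤ x i * (yP - yQ) := by
    intro i
    have := (hslope i).1
    rw [div_le_div_iff₀ hD (hy i)] at this
    linarith
  have hB : ∀ i, x i * yQ ≤ xQ * y i := by
    intro i
    have := (hslope i).2
    rw [div_le_div_iff₀ (hy i) hyQ0] at this
    linarith
  by_cases hcase : xQ * (yP - yQ) = (xP - xQ) * yQ
  · -- degenerate case: the two slopes coincide, all points on one segment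
    have hxy : ∀ i, x i * yQ = xQ * y i := by
      intro i
      have h1 := hA i
      have h2 := hB i
      have h3 : x i * (yP - yQ) * yQ ≤ xQ * y i * (yP - yQ) := by nlinarith
      have h5 : xQ * y i * (yP - yQ) = (xP - xQ) * y i * yQ := by
        linear_combination y i * hcase
      have h4 : (xP - xQ) * y i * yQ ≤ x i * (yP - yQ) * yQ := by nlinarith
      have h6 : x i * (yP - yQ) * yQ = xQ * y i * (yP - yQ) :=
        le_antisymm h3 (by linarith)
      have h6' : x i * yQ * (yP - yQ) = xQ * y i * (yP - yQ) := by
        linear_combination h6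
      exact mul_right_cancel₀ (ne_of_gt hD) h6'
    apply chain_bound c hc k x y _ _ _ _ (fun i => y i / yP) (fun i => y i / yP)
    · intro i; exact div_nonneg (hy i).le hyPpos.le
    · intro i; exact div_nonneg (hy i).le hyPpos.le
    · intro i
      have h7 := hxy i
      have h8' : x i * (yP - yQ) * yQ = (xP - xQ) * y i * yQ := by
        linear_combination (yP - yQ) * h7 + y i * hcase
      have h8 : x i * (yP - yQ) = (xP - xQ) * y i :=
        mul_right_cancel₀ (ne_of_gt hyQ0) h8'
      rw [div_mul_eq_mul_div, div_mul_eq_mul_div, ← add_div,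
        eq_comm, div_eq_iff (ne_of_gt hyPpos)]
      linear_combination -h7 - h8
    · intro i
      rw [div_mul_eq_mul_div, div_mul_eq_mul_div, ← add_div,
        eq_comm, div_eq_iff (ne_of_gt hyPpos)]
      ring
    · rw [← Finset.sum_div, ← hyP, div_self (ne_of_gt hyPpos)]
    · rw [← Finset.sum_div, ← hyP, div_self (ne_of_gt hyPpos)]
  · -- nondegenerate case
    have i0 : Fin k := ⟨0, hk⟩
    have hne : xQ * (yP - yQ) - (xP - xQ) * yQ ≠ 0 := by
      intro h0; exact hcase (by linarith)
    have hnonneg : 0 ≤ xQ * (yP - yQ) - (xP - xQ) * yQ := by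
      nlinarith [hA i0, hB i0, hy i0, hyQ0, hD]
    have hEpos : 0 < xQ * (yP - yQ) - (xP - xQ) * yQ :=
      lt_of_le_of_ne hnonneg (Ne.symm hne)
    have hEne : xQ * (yP - yQ) - (xP - xQ) * yQ ≠ 0 := hne
    apply chain_bound c hc k x y _ _ _ _
      (fun i => (x i * (yP - yQ) - (xP - xQ) * y i) / (xQ * (yP - yQ) - (xP - xQ) * yQ))
      (fun i => (xQ * y i - x i * yQ) / (xQ * (yP - yQ) - (xP - xQ) * yQ))
    · intro i
      apply div_nonneg _ hEpos.le
      have := hA i; linarith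
    · intro i
      apply div_nonneg _ hEpos.le
      have := hB i; linarith
    · intro i
      rw [div_mul_eq_mul_div, div_mul_eq_mul_div, ← add_div,
        eq_comm, div_eq_iff hEne]
      ring
    · intro i
      rw [div_mul_eq_mul_div, div_mul_eq_mul_div, ← add_div,
        eq_comm, div_eq_iff hEne]
      ring
    · rw [← Finset.sum_div, div_eq_one_iff_eq hEne]
      have h : ∑ i, (x i * (yP - yQ) - (xP - xQ) * y i)
          = (∑ i, x i) * (yP - yQ) - (xP - xQ) * ∑ i, y i := by
        rw [Finset.sum_sub_distrib, ← Finset.sum_mul, ← Finset.mul_sum]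
      rw [h, ← hxP, ← hyP]
      ring
    · rw [← Finset.sum_div, div_eq_one_iff_eq hEne]
      have h : ∑ i, (xQ * y i - x i * yQ)
          = xQ * (∑ i, y i) - (∑ i, x i) * yQ := by
        rw [Finset.sum_sub_distrib, ← Finset.mul_sum, ← Finset.sum_mul]
      rw [h, ← hxP, ← hyP]
      ring
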